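/- Let c ∈ [0,1), 0 ≤ δ ≤ q with q > cδ. Then for any k ≥ 1 and any μ_1, …, μ_k ∈ [0, (1−c)²/(q−cδ)], applying the product of momentum matrices to the bias vector (1, 1)ᵀ gives ‖A(μ_1) A(μ_2) ⋯ A(μ_k) · (1, 1)ᵀ‖ ≤ 2, where A(μ) = [[0, 1−δμ],[−c, 1+c−qμ]] and ‖·‖ is the Euclidean norm on ℝ². -/

import Mathlib

open Matrix Real

noncomputable section

/-- The 2×2 momentum matrix `A(μ) = [[0, 1−δμ], [−c, 1+c−qμ]]`. -/
def Amat (c δ q μ : ℝ) : Matrix (Fin 2) (Fin 2) ℝ :=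
  !![0, 1 - δ * μ; -c, 1 + c - q * μ]

/-- The Euclidean norm on `ℝ²` (vectors indexed by `Fin 2`). -/
def euclNorm2 (v : Fin 2 → ℝ) : ℝ := Real.sqrt (v 0 ^ 2 + v 1 ^ 2)

lemma key_quad (c s t W B : ℝ) (hc0 : 0 ≤ c) (hc1 : c < 1)
    (ht : 0 ≤ t) (hts : t ≤ s) (hs : s ≤ 1 - c) :
    (W - c * B - s * W) ^ 2 + (c * B + t * W) ^ 2 ≤ (W - c * B) ^ 2 + B ^ 2 := by
  have hs0 : 0 ≤ s := le_trans ht hts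
  have htt : t * t ≤ s * s := mul_le_mul hts hts ht hs0
  have hss : s * s ≤ s * (1 - c) := mul_le_mul_of_nonneg_left hs hs0
  have hcc : c * c ≤ c := by nlinarith
  have hD : 0 ≤ 2 * s - s ^ 2 - t ^ 2 := by nlinarith
  have hst : c ^ 2 * (s * t) ≤ c ^ 2 * (s * s) :=
    mul_le_mul_of_nonneg_left (mul_le_mul_of_nonneg_left hts hs0) (sq_nonneg c)
  have h1 : c ^ 2 * (s + t) ^ 2 ≤ (2 * s - s ^ 2 - t ^ 2) * (1 - c ^ 2) := by
    nlinarith [mul_nonneg hs0 (sq_nonneg (1 - c)), sq_nonneg c, hs0,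
      mul_nonneg (mul_nonneg hs0 hs0) (sq_nonneg (1 - c)),
      mul_nonneg hs0 hc0, mul_nonneg (mul_nonneg hs0 hs0) hc0]
  rcases eq_or_lt_of_le hc0 with hc0' | hcpos
  · subst hc0'
    nlinarith [mul_nonneg (sq_nonneg W) hD, sq_nonneg B]
  rcases eq_or_lt_of_le hD with hD0 | hDpos
  · have hs' : s = 0 := by
      by_contra hne
      have hpos : 0 < s := lt_of_le_of_ne hs0 (Ne.symm hne)
      nlinarith [mul_pos hpos hcpos]
    have ht' : t = 0 := by
      have h2 : t ^ 2 = 0 := by rw [hs'] at hD0; nlinarith [sq_nonneg t]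
      exact pow_eq_zero_iff (by norm_num) |>.mp h2
    subst hs'; subst ht'
    nlinarith [mul_nonneg (show (0:ℝ) ≤ 1 - c ^ 2 by nlinarith) (sq_nonneg B)]
  · nlinarith [sq_nonneg ((2 * s - s ^ 2 - t ^ 2) * W - c * (s + t) * B),
      mul_nonneg (le_of_lt hDpos) (sq_nonneg B), sq_nonneg B,
      mul_nonneg (mul_nonneg (sq_nonneg c) (sq_nonneg (s + t))) (sq_nonneg B)]

lemma step (c δ q μ x y : ℝ) (hc0 : 0 ≤ c) (hc1 : c < 1) (hδ : 0 ≤ δ) (hδq : δ ≤ q)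
    (hqcδ : c * δ < q) (hμ0 : 0 ≤ μ) (hμ1 : μ ≤ (1 - c) ^ 2 / (q - c * δ))
    (h : (y - c * x) ^ 2 + (x - y) ^ 2 ≤ (1 - c) ^ 2) :
    ((-c * x + (1 + c - q * μ) * y) - c * ((1 - δ * μ) * y)) ^ 2
      + ((1 - δ * μ) * y - (-c * x + (1 + c - q * μ) * y)) ^ 2 ≤ (1 - c) ^ 2 := by
  have hc1' : (0:ℝ) < 1 - c := by linarith
  have hden : (0:ℝ) < q - c * δ := by linarith
  have hμq : μ * (q - c * δ) ≤ (1 - c) ^ 2 := by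
    have := (le_div_iff₀ hden).mp hμ1
    linarith
  set s := (q - c * δ) * μ / (1 - c) with hsdef
  set t := (q - δ) * μ / (1 - c) with htdef
  have ht0 : 0 ≤ t := by
    apply div_nonneg _ (le_of_lt hc1')
    have h1 : c * δ ≤ δ := by nlinarith
    nlinarith
  have hts : t ≤ s := by
    rw [htdef, hsdef, div_le_div_iff₀ hc1' hc1']
    nlinarith [mul_nonneg (mul_nonneg (show (0:ℝ) ≤ δ - c * δ by nlinarith) hμ0) hc1'.le]
  have hs1 : s ≤ 1 - c := by
    rw [hsdef, div_le_iff₀ hc1']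
    nlinarith
  have key := key_quad c s t ((1 - c) * y) (x - y) hc0 hc1 ht0 hts hs1
  have e1 : (1 - c) * y - c * (x - y) - s * ((1 - c) * y)
      = (-c * x + (1 + c - q * μ) * y) - c * ((1 - δ * μ) * y) := by
    rw [hsdef]; field_simp; ring
  have e2 : c * (x - y) + t * ((1 - c) * y)
      = (1 - δ * μ) * y - (-c * x + (1 + c - q * μ) * y) := by
    rw [htdef]; field_simp; ring
  have e3 : ((1 - c) * y - c * (x - y)) ^ 2 + (x - y) ^ 2
      = (y - c * x) ^ 2 + (x - y) ^ 2 := by ring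
  rw [e1, e2, e3] at key
  linarith

lemma list_inv (c δ q : ℝ) (hc0 : 0 ≤ c) (hc1 : c < 1) (hδ : 0 ≤ δ) (hδq : δ ≤ q)
    (hqcδ : c * δ < q) :
    ∀ L : List ℝ, (∀ m ∈ L, 0 ≤ m ∧ m ≤ (1 - c) ^ 2 / (q - c * δ)) →
      ((L.map (Amat c δ q)).prod.mulVec ![1, 1] 1
          - c * (L.map (Amat c δ q)).prod.mulVec ![1, 1] 0) ^ 2
        + ((L.map (Amat c δ q)).prod.mulVec ![1, 1] 0
          - (L.map (Amat c δ q)).prod.mulVec ![1, 1] 1) ^ 2 ≤ (1 - c) ^ 2 := by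
  intro L
  induction L with
  | nil =>
    intro _
    simp [Matrix.one_mulVec]
  | cons m L ih =>
    intro hmem
    have hm := hmem m List.mem_cons_self
    have hL := fun x hx => hmem x (List.mem_cons_of_mem m hx)
    have hihL := ih hL
    set w := (L.map (Amat c δ q)).prod.mulVec ![1, 1] with hw
    have hprod : ((m :: L).map (Amat c δ q)).prod.mulVec ![1, 1]
        = (Amat c δ q m).mulVec w := by
      rw [List.map_cons, List.prod_cons, ← Matrix.mulVec_mulVec]
    rw [hprod]
    have h0 : (Amat c δ q m).mulVec w 0 = (1 - δ * m) * w 1 := by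
      simp [Amat, Matrix.mulVec, dotProduct, Fin.sum_univ_two, Matrix.vecHead, Matrix.vecTail]
    have h1 : (Amat c δ q m).mulVec w 1 = -c * w 0 + (1 + c - q * m) * w 1 := by
      simp [Amat, Matrix.mulVec, dotProduct, Fin.sum_univ_two, Matrix.vecHead, Matrix.vecTail]
    rw [h0, h1]
    exact step c δ q m (w 0) (w 1) hc0 hc1 hδ hδq hqcδ hm.1 hm.2 hihL

theorem momentum_matrix_product_bias_vector_bound
    (c δ q : ℝ) (hc0 : 0 ≤ c) (hc1 : c < 1) (hδ : 0 ≤ δ) (hδq : δ ≤ q) (hqcδ : c * δ < q)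
    (k : ℕ) (hk : 1 ≤ k) (μ : Fin k → ℝ)
    (hμ : ∀ i, 0 ≤ μ i ∧ μ i ≤ (1 - c) ^ 2 / (q - c * δ)) :
    euclNorm2 ((List.ofFn fun i : Fin k => Amat c δ q (μ i)).prod.mulVec ![1, 1]) ≤ 2 := by
  have hL : (List.ofFn fun i : Fin k => Amat c δ q (μ i))
      = (List.ofFn μ).map (Amat c δ q) := by
    rw [List.map_ofFn]; rfl
  rw [hL]
  have hmem : ∀ m ∈ List.ofFn μ, 0 ≤ m ∧ m ≤ (1 - c) ^ 2 / (q - c * δ) := by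
    intro m hm
    rw [List.mem_ofFn] at hm
    obtain ⟨i, rfl⟩ := hm
    exact hμ i
  have hinv := list_inv c δ q hc0 hc1 hδ hδq hqcδ (List.ofFn μ) hmem
  set v := ((List.ofFn μ).map (Amat c δ q)).prod.mulVec ![1, 1] with hv
  have hc1' : (0:ℝ) < 1 - c := by linarith
  have hbound : v 0 ^ 2 + v 1 ^ 2 ≤ 4 := by
    have ha : ((1 - c) * v 0) ^ 2 ≤ 2 * (1 - c) ^ 2 := by
      nlinarith [hinv, sq_nonneg ((v 1 - c * v 0) - (v 0 - v 1))]
    have hb : ((1 - c) * v 1) ^ 2 ≤ 2 * (1 - c) ^ 2 := by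
      nlinarith [hinv, sq_nonneg ((v 1 - c * v 0) - c * (v 0 - v 1)),
        mul_nonneg (show (0:ℝ) ≤ 1 - c ^ 2 by nlinarith) (sq_nonneg (v 0 - v 1))]
    have hx2 : v 0 ^ 2 ≤ 2 := by nlinarith [ha, mul_pos hc1' hc1']
    have hy2 : v 1 ^ 2 ≤ 2 := by nlinarith [hb, mul_pos hc1' hc1']
    linarith
  have : euclNorm2 v ≤ Real.sqrt 4 := by
    unfold euclNorm2
    exact Real.sqrt_le_sqrt hbound
  calc euclNorm2 v ≤ Real.sqrt 4 := this
    _ = 2 := by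
      rw [show (4:ℝ) = 2 ^ 2 by norm_num, Real.sqrt_sq (by norm_num)]
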